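/- For every nonnegative integer m and every real u > 0 with u ≠ 1, the integral ∫₀^∞ xᵐ/((x+1)^{m+1}(xu+1)) dx equals (-1)^m (u-1)^{-(m+1)} (log u - ∑_{j=1}^{m} (-1)^{j+1} (u-1)^j / j). -/

import Mathlib

open MeasureTheory Real Filter Set

lemma tendsto_inv_add_one : Filter.Tendsto (fun x : ℝ => (x+1)⁻¹) atTop (nhds 0) :=
  tendsto_inv_atTop_zero.comp (tendsto_atTop_add_const_right _ 1 tendsto_id)

lemma aux_A_val (m : ℕ) :
    ∫ x in Set.Ioi (0:ℝ), x ^ m / (x + 1) ^ (m + 2) = 1 / (m + 1 : ℝ) := by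
  have hderiv : ∀ x ∈ Set.Ici (0:ℝ),
      HasDerivAt (fun x : ℝ => (x/(x+1))^(m+1)/(m+1)) (x ^ m / (x + 1) ^ (m + 2)) x := by
    intro x hx
    have hx0 : (0:ℝ) ≤ x := hx
    have hx1 : x + 1 ≠ 0 := by positivity
    have h : HasDerivAt (fun x : ℝ => x/(x+1)) ((1*(x+1) - x*1)/(x+1)^2) x :=
      (hasDerivAt_id x).div ((hasDerivAt_id x).add_const 1) hx1
    have h2 := (h.pow (m+1)).div_const ((m:ℝ)+1)
    convert h2 using 1
    any_goals rfl
    have hm : ((m:ℝ)+1) ≠ 0 := by positivity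
    rw [Nat.add_sub_cancel, div_pow]; push_cast
    field_simp
    ring
  have hpos : ∀ x ∈ Set.Ioi (0:ℝ), 0 ≤ x ^ m / (x + 1) ^ (m + 2) := by
    intro x hx
    have hx0 : (0:ℝ) < x := hx
    positivity
  have htends : Filter.Tendsto (fun x : ℝ => (x/(x+1))^(m+1)/(m+1)) atTop
      (nhds (1 / ((m:ℝ)+1))) := by
    have h1 : Filter.Tendsto (fun x : ℝ => x/(x+1)) atTop (nhds 1) := by
      have : Filter.Tendsto (fun x : ℝ => 1 - (x+1)⁻¹) atTop (nhds 1) := by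
        simpa using tendsto_const_nhds.sub tendsto_inv_add_one
      refine this.congr' ?_
      filter_upwards [eventually_gt_atTop (0:ℝ)] with x hx
      have hx1 : x + 1 ≠ 0 := by positivity
      field_simp
      ring
    have := (h1.pow (m+1)).div_const ((m:ℝ)+1)
    simpa using this
  have := integral_Ioi_of_hasDerivAt_of_nonneg' hderiv hpos htends
  rw [this]
  norm_num

lemma aux_A_int (m : ℕ) :
    IntegrableOn (fun x : ℝ => x ^ m / (x + 1) ^ (m + 2)) (Set.Ioi (0:ℝ)) := by
  have hderiv : ∀ x ∈ Set.Ici (0:ℝ),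
      HasDerivAt (fun x : ℝ => (x/(x+1))^(m+1)/(m+1)) (x ^ m / (x + 1) ^ (m + 2)) x := by
    intro x hx
    have hx0 : (0:ℝ) ≤ x := hx
    have hx1 : x + 1 ≠ 0 := by positivity
    have h : HasDerivAt (fun x : ℝ => x/(x+1)) ((1*(x+1) - x*1)/(x+1)^2) x :=
      (hasDerivAt_id x).div ((hasDerivAt_id x).add_const 1) hx1
    have h2 := (h.pow (m+1)).div_const ((m:ℝ)+1)
    convert h2 using 1
    any_goals rfl
    have hm : ((m:ℝ)+1) ≠ 0 := by positivity
    rw [Nat.add_sub_cancel, div_pow]; push_cast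
    field_simp
    ring
  have hpos : ∀ x ∈ Set.Ioi (0:ℝ), 0 ≤ x ^ m / (x + 1) ^ (m + 2) := by
    intro x hx
    have hx0 : (0:ℝ) < x := hx
    positivity
  have htends : Filter.Tendsto (fun x : ℝ => (x/(x+1))^(m+1)/(m+1)) atTop
      (nhds (1 / ((m:ℝ)+1))) := by
    have h1 : Filter.Tendsto (fun x : ℝ => x/(x+1)) atTop (nhds 1) := by
      have : Filter.Tendsto (fun x : ℝ => 1 - (x+1)⁻¹) atTop (nhds 1) := by
        simpa using tendsto_const_nhds.sub tendsto_inv_add_one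
      refine this.congr' ?_
      filter_upwards [eventually_gt_atTop (0:ℝ)] with x hx
      have hx1 : x + 1 ≠ 0 := by positivity
      field_simp
      ring
    have := (h1.pow (m+1)).div_const ((m:ℝ)+1)
    simpa using this
  exact integrableOn_Ioi_deriv_of_nonneg' hderiv hpos htends

lemma aux_B_val (u : ℝ) (hu : 0 < u) (hu1 : u ≠ 1) :
    ∫ x in Set.Ioi (0:ℝ), 1 / ((x + 1) * (x * u + 1)) = Real.log u / (u - 1) := by
  have hv : u - 1 ≠ 0 := sub_ne_zero.mpr hu1
  have hderiv : ∀ x ∈ Set.Ici (0:ℝ),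
      HasDerivAt (fun x : ℝ => (Real.log (x*u+1) - Real.log (x+1))/(u-1))
        (1 / ((x + 1) * (x * u + 1))) x := by
    intro x hx
    have hx0 : (0:ℝ) ≤ x := hx
    have hx1 : x + 1 ≠ 0 := by positivity
    have hxu : x * u + 1 ≠ 0 := by positivity
    have h1 : HasDerivAt (fun x : ℝ => Real.log (x*u+1)) (u/(x*u+1)) x := by
      have := (((hasDerivAt_id x).mul_const u).add_const 1).log hxu
      simpa using this
    have h2 : HasDerivAt (fun x : ℝ => Real.log (x+1)) (1/(x+1)) x := by
      have := ((hasDerivAt_id x).add_const 1).log hx1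
      simpa using this
    have h3 := (h1.sub h2).div_const (u-1)
    convert h3 using 1
    any_goals rfl
    field_simp
    ring
  have hpos : ∀ x ∈ Set.Ioi (0:ℝ), 0 ≤ 1 / ((x + 1) * (x * u + 1)) := by
    intro x hx
    have hx0 : (0:ℝ) < x := hx
    positivity
  have htends : Filter.Tendsto (fun x : ℝ => (Real.log (x*u+1) - Real.log (x+1))/(u-1))
      atTop (nhds (Real.log u / (u - 1))) := by
    have hr : Filter.Tendsto (fun x : ℝ => (x*u+1)/(x+1)) atTop (nhds u) := by
      have : Filter.Tendsto (fun x : ℝ => u + (1-u) * (x+1)⁻¹) atTop (nhds u) := by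
        simpa using tendsto_const_nhds.add (tendsto_const_nhds.mul tendsto_inv_add_one)
      refine this.congr' ?_
      filter_upwards [eventually_gt_atTop (0:ℝ)] with x hx
      have hx1 : x + 1 ≠ 0 := by positivity
      field_simp
      ring
    have hl : Filter.Tendsto (fun x : ℝ => Real.log (x*u+1) - Real.log (x+1)) atTop
        (nhds (Real.log u)) := by
      have := (Real.continuousAt_log (ne_of_gt hu)).tendsto.comp hr
      refine this.congr' ?_
      filter_upwards [eventually_gt_atTop (0:ℝ)] with x hx
      have hx1 : x + 1 ≠ 0 := by positivity
      have hxu : x * u + 1 ≠ 0 := by positivity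
      simp only [Function.comp_apply]
      rw [Real.log_div hxu hx1]
    exact hl.div_const _
  have := integral_Ioi_of_hasDerivAt_of_nonneg' hderiv hpos htends
  rw [this]
  norm_num

lemma aux_B_int (u : ℝ) (hu : 0 < u) (hu1 : u ≠ 1) :
    IntegrableOn (fun x : ℝ => 1 / ((x + 1) * (x * u + 1))) (Set.Ioi (0:ℝ)) := by
  have hv : u - 1 ≠ 0 := sub_ne_zero.mpr hu1
  have hderiv : ∀ x ∈ Set.Ici (0:ℝ),
      HasDerivAt (fun x : ℝ => (Real.log (x*u+1) - Real.log (x+1))/(u-1))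
        (1 / ((x + 1) * (x * u + 1))) x := by
    intro x hx
    have hx0 : (0:ℝ) ≤ x := hx
    have hx1 : x + 1 ≠ 0 := by positivity
    have hxu : x * u + 1 ≠ 0 := by positivity
    have h1 : HasDerivAt (fun x : ℝ => Real.log (x*u+1)) (u/(x*u+1)) x := by
      have := (((hasDerivAt_id x).mul_const u).add_const 1).log hxu
      simpa using this
    have h2 : HasDerivAt (fun x : ℝ => Real.log (x+1)) (1/(x+1)) x := by
      have := ((hasDerivAt_id x).add_const 1).log hx1
      simpa using this
    have h3 := (h1.sub h2).div_const (u-1)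
    convert h3 using 1
    any_goals rfl
    field_simp
    ring
  have hpos : ∀ x ∈ Set.Ioi (0:ℝ), 0 ≤ 1 / ((x + 1) * (x * u + 1)) := by
    intro x hx
    have hx0 : (0:ℝ) < x := hx
    positivity
  have htends : Filter.Tendsto (fun x : ℝ => (Real.log (x*u+1) - Real.log (x+1))/(u-1))
      atTop (nhds (Real.log u / (u - 1))) := by
    have hr : Filter.Tendsto (fun x : ℝ => (x*u+1)/(x+1)) atTop (nhds u) := by
      have : Filter.Tendsto (fun x : ℝ => u + (1-u) * (x+1)⁻¹) atTop (nhds u) := by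
        simpa using tendsto_const_nhds.add (tendsto_const_nhds.mul tendsto_inv_add_one)
      refine this.congr' ?_
      filter_upwards [eventually_gt_atTop (0:ℝ)] with x hx
      have hx1 : x + 1 ≠ 0 := by positivity
      field_simp
      ring
    have hl : Filter.Tendsto (fun x : ℝ => Real.log (x*u+1) - Real.log (x+1)) atTop
        (nhds (Real.log u)) := by
      have := (Real.continuousAt_log (ne_of_gt hu)).tendsto.comp hr
      refine this.congr' ?_
      filter_upwards [eventually_gt_atTop (0:ℝ)] with x hx
      have hx1 : x + 1 ≠ 0 := by positivity
      have hxu : x * u + 1 ≠ 0 := by positivity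
      simp only [Function.comp_apply]
      rw [Real.log_div hxu hx1]
    exact hl.div_const _
  exact integrableOn_Ioi_deriv_of_nonneg' hderiv hpos htends

lemma aux_f_int (m : ℕ) (u : ℝ) (hu : 0 < u) (hu1 : u ≠ 1) :
    IntegrableOn (fun x : ℝ => x ^ m / ((x + 1) ^ (m + 1) * (x * u + 1)))
      (Set.Ioi (0:ℝ)) := by
  have hB := aux_B_int u hu hu1
  refine hB.mono' ?_ ?_
  · refine ContinuousOn.aestronglyMeasurable ?_ measurableSet_Ioi
    refine ContinuousOn.div (by fun_prop) (by fun_prop) ?_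
    intro x hx
    have hx0 : (0:ℝ) < x := hx
    positivity
  · filter_upwards [ae_restrict_mem measurableSet_Ioi] with x hx
    have hx0 : (0:ℝ) < x := hx
    have hxu : (0:ℝ) < x * u + 1 := by positivity
    have hx1 : (0:ℝ) < x + 1 := by positivity
    rw [Real.norm_eq_abs, abs_of_nonneg (by positivity)]
    have h1 : x ^ m ≤ (x+1) ^ m := pow_le_pow_left₀ hx0.le (by linarith) m
    calc x ^ m / ((x + 1) ^ (m + 1) * (x * u + 1))
        ≤ (x+1) ^ m / ((x + 1) ^ (m + 1) * (x * u + 1)) := by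
          rw [div_le_div_iff_of_pos_right (by positivity)]; exact h1
      _ = 1 / ((x + 1) * (x * u + 1)) := by
          rw [pow_succ]; field_simp

theorem modified_log_closed_form (m : ℕ) (u : ℝ) (hu : 0 < u) (hu1 : u ≠ 1) :
    ∫ x in Set.Ioi (0:ℝ), x ^ m / ((x + 1) ^ (m + 1) * (x * u + 1)) =
      (-1 : ℝ) ^ m * (u - 1) ^ (-(m + 1 : ℤ)) *
        (Real.log u - ∑ j ∈ Finset.Icc 1 m, (-1 : ℝ) ^ (j + 1) * (u - 1) ^ j / j) := by
  have hv : u - 1 ≠ 0 := sub_ne_zero.mpr hu1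
  induction m with
  | zero =>
    simp only [pow_zero, pow_one, Finset.Icc_self, Nat.cast_zero]
    rw [show Finset.Icc 1 0 = (∅ : Finset ℕ) by rfl]
    simp only [Finset.sum_empty, sub_zero]
    rw [show (-((0:ℤ)+1)) = -1 by norm_num, zpow_neg_one]
    simp only [zero_add, pow_one]
    rw [aux_B_val u hu hu1]
    field_simp
  | succ n ih =>
    have key : ∫ x in Set.Ioi (0:ℝ), x ^ (n+1) / ((x + 1) ^ (n + 2) * (x * u + 1)) =
        ((1/(n+1:ℝ)) - ∫ x in Set.Ioi (0:ℝ), x ^ n / ((x + 1) ^ (n + 1) * (x * u + 1))) / (u-1) := by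
      rw [setIntegral_congr_fun measurableSet_Ioi (g := fun x : ℝ =>
        (x ^ n / (x + 1) ^ (n + 2) - x ^ n / ((x + 1) ^ (n + 1) * (x * u + 1))) / (u-1)) ?_]
      · rw [integral_div, integral_sub (aux_A_int n) (aux_f_int n u hu hu1), aux_A_val n]
      · intro x hx
        have hx0 : (0:ℝ) < x := hx
        have hx1 : x + 1 ≠ 0 := by positivity
        have hxu : x * u + 1 ≠ 0 := by positivity
        field_simp
        ring
    rw [show n + 1 + 1 = n + 2 from rfl] at *
    rw [key, ih]
    rw [Finset.sum_Icc_succ_top (by norm_num : 1 ≤ n + 1)]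
    have hz : ∀ k : ℕ, (u-1) ^ (-(k + 1 : ℤ)) = ((u-1) ^ (k+1) : ℝ)⁻¹ := by
      intro k
      rw [zpow_neg]
      norm_cast
    push_cast
    rw [show (-((n:ℤ) + 1 + 1)) = -(((n+1):ℕ) + 1 : ℤ) by push_cast; ring,
        show (-((n:ℤ) + 1)) = -((n:ℕ) + 1 : ℤ) by push_cast; ring, hz, hz]
    have hn1 : ((n:ℝ)+1) ≠ 0 := by positivity
    have hp1 : ((u-1) ^ (n+1) : ℝ) ≠ 0 := pow_ne_zero _ hv
    have hp2 : ((u-1) ^ (n+1+1) : ℝ) ≠ 0 := pow_ne_zero _ hv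
    rcases Nat.even_or_odd n with hpar|hpar <;>
      simp only [pow_succ, hpar.neg_one_pow] <;> field_simp <;> ring
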